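/- The function k_ntk(β) = (1/π)(√(1−β²) + 2β(π − arccos β)) admits on [−1,1] the absolutely convergent series expansion k_ntk(β) = 1/π + β + (1/π)·Σ_{ℓ=0}^∞ [(2ℓ+3)·(2ℓ)! / (2^{2ℓ}·(ℓ!)²·(2ℓ+1)·(2ℓ+2))]·β^{2ℓ+2}. -/

import Mathlib

open Real Filter Set Topology

noncomputable def cc (n : ℕ) : ℝ := ((2*n).factorial : ℝ) / (4^n * ((n.factorial : ℝ))^2)

lemma cc_pos (n : ℕ) : 0 < cc n := by
  unfold cc; positivity

lemma cc_succ (n : ℕ) : cc (n+1) = cc n * (2*n+1) / (2*n+2) := by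
  unfold cc
  have h1 : (2*(n+1)) = (2*n+1)+1 := by ring
  rw [h1, Nat.factorial_succ, Nat.factorial_succ, Nat.factorial_succ]
  push_cast
  have h2 : ((n.factorial : ℝ)) ≠ 0 := Nat.cast_ne_zero.2 n.factorial_ne_zero
  field_simp
  ring

lemma cc_le_one (n : ℕ) : cc n ≤ 1 := by
  induction n with
  | zero => simp [cc]
  | succ n ih =>
    rw [cc_succ]
    have h : (2*(n:ℝ)+1)/(2*n+2) ≤ 1 := by
      rw [div_le_one (by positivity)]; linarith
    calc cc n * (2*n+1) / (2*n+2) = cc n * ((2*n+1)/(2*n+2)) := by ring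
    _ ≤ 1 * 1 := by
        apply mul_le_mul ih h (by positivity) zero_le_one
    _ = 1 := by ring

-- derivative of the partial functions
lemma deriv_term (n : ℕ) (y : ℝ) :
    HasDerivAt (fun z : ℝ => cc n * z^n) (cc n * (n * y^(n-1))) y :=
  (hasDerivAt_pow n y).const_mul (cc n)

lemma summable_u {r : ℝ} (hr0 : 0 < r) (hr1 : r < 1) :
    Summable (fun n : ℕ => (n:ℝ) * r^n / r) := by
  have := summable_pow_mul_geometric_of_norm_lt_one (R := ℝ) 1 (by
    rwa [Real.norm_eq_abs, abs_of_pos hr0])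
  simpa [pow_one, div_eq_mul_inv] using this.mul_right r⁻¹

lemma bound_term {r : ℝ} (hr0 : 0 < r) (n : ℕ) {y : ℝ} (hy : |y| ≤ r) :
    ‖cc n * (n * y^(n-1))‖ ≤ (n:ℝ) * r^n / r := by
  rcases n with _ | m
  · simp
  · have h1 : |y^m| ≤ r^m := by
      rw [abs_pow]; exact pow_le_pow_left₀ (abs_nonneg y) hy m
    have hcc := cc_le_one (m+1)
    have hccp := cc_pos (m+1)
    rw [Real.norm_eq_abs, abs_mul, abs_mul, abs_of_pos hccp]
    simp only [Nat.add_sub_cancel, Nat.abs_cast]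
    have key : cc (m+1) * (((m+1:ℕ):ℝ) * |y^m|) ≤ ((m+1:ℕ):ℝ) * r^m := by
      calc cc (m+1) * (((m+1:ℕ):ℝ) * |y^m|) ≤ 1 * (((m+1:ℕ):ℝ) * r^m) := by
            apply mul_le_mul hcc _ (by positivity) zero_le_one
            apply mul_le_mul_of_nonneg_left h1 (by positivity)
        _ = ((m+1:ℕ):ℝ) * r^m := one_mul _
    have heq : ((m+1:ℕ):ℝ) * r^(m+1) / r = ((m+1:ℕ):ℝ) * r^m := by
      field_simp; ring
    rw [heq]; exact key

lemma summable_at_zero : Summable (fun n : ℕ => cc n * (0:ℝ)^n) := by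
  apply summable_of_ne_finset_zero (s := {0})
  intro n hn
  simp only [Finset.mem_singleton] at hn
  rw [zero_pow hn, mul_zero]

-- the sum function has the right derivative on Ioo (-r) r
lemma F_deriv {r : ℝ} (hr0 : 0 < r) (hr1 : r < 1) {y : ℝ} (hy : y ∈ Ioo (-r) r) :
    HasDerivAt (fun z : ℝ => ∑' n, cc n * z^n) (∑' n, cc n * (n * y^(n-1))) y := by
  apply hasDerivAt_tsum_of_isPreconnected (summable_u hr0 hr1) isOpen_Ioo
    (isPreconnected_Ioo) (fun n z _ => deriv_term n z)
    (fun n z hz => bound_term hr0 n (abs_le.2 ⟨(le_of_lt hz.1), le_of_lt hz.2⟩))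
    (Set.mem_Ioo.2 ⟨by linarith, hr0⟩) summable_at_zero hy

lemma F_summable {r : ℝ} (hr0 : 0 < r) (hr1 : r < 1) {y : ℝ} (hy : y ∈ Ioo (-r) r) :
    Summable (fun n : ℕ => cc n * y^n) := by
  apply summable_of_summable_hasDerivAt_of_isPreconnected (summable_u hr0 hr1) isOpen_Ioo
    isPreconnected_Ioo (fun n z _ => deriv_term n z)
    (fun n z hz => bound_term hr0 n (abs_le.2 ⟨(le_of_lt hz.1), le_of_lt hz.2⟩))
    (Set.mem_Ioo.2 ⟨by linarith, hr0⟩) summable_at_zero hy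

-- ODE: F y = 2*(1-y)*(D y)  where D y is the derivative sum
lemma ode {y F D : ℝ} (hF : HasSum (fun n : ℕ => cc n * y^n) F)
    (hD : HasSum (fun n : ℕ => cc n * (n * y^(n-1))) D) :
    F = 2*(1-y)*D := by
  have hz : ∑ i ∈ Finset.range 1, cc i * (i * y^(i-1)) = 0 := by simp
  have hD2 : HasSum (fun n : ℕ => cc n * (n * y^(n-1)))
      (D + ∑ i ∈ Finset.range 1, cc i * (i * y^(i-1))) := by rwa [hz, add_zero]
  have h1 : HasSum (fun n : ℕ => cc (n+1) * (((n+1:ℕ):ℝ) * y^(n+1-1))) D :=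
    (hasSum_nat_add_iff 1).2 hD2
  have h2 : HasSum (fun n : ℕ => (2*(n:ℝ)+1) * cc n * y^n) (2*D) := by
    have h := h1.mul_left 2
    refine h.congr_fun fun n => ?_
    rw [cc_succ]
    have hne : (2*(n:ℝ)+2) ≠ 0 := by positivity
    simp only [Nat.add_sub_cancel]
    push_cast
    field_simp
  have h3 : HasSum (fun n : ℕ => 2*(n:ℝ) * cc n * y^n) (2*y*D) := by
    have h := hD.mul_left (2*y)
    refine h.congr_fun fun n => ?_
    rcases n with _ | m
    · simp
    · simp only [Nat.add_sub_cancel]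
      push_cast
      ring
  have h5 : HasSum (fun n : ℕ => cc n * y^n) (2*D - 2*y*D) :=
    (h2.sub h3).congr_fun fun n => by ring
  have h6 := hF.unique h5
  rw [h6]; ring

lemma tsum_at_zero : ∑' n : ℕ, cc n * (0:ℝ)^n = 1 := by
  rw [tsum_eq_single 0]
  · simp [cc]
  · intro n hn; rw [zero_pow hn, mul_zero]

-- Lemma A
lemma hasSum_inv_sqrt {x : ℝ} (hx0 : 0 ≤ x) (hx1 : x < 1) :
    HasSum (fun n : ℕ => cc n * x^n) (1 / Real.sqrt (1-x)) := by
  set r : ℝ := (x+1)/2 with hr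
  have hr0 : 0 < r := by positivity
  have hr1 : r < 1 := by rw [hr]; linarith
  have hxr : x < r := by rw [hr]; linarith
  have hmem : ∀ y ∈ Icc (0:ℝ) x, y ∈ Ioo (-r) r := by
    intro y hy; exact ⟨by linarith [hy.1], by linarith [hy.2]⟩
  have hGderiv : ∀ y ∈ Ioo (-r) r,
      HasDerivAt (fun z : ℝ => Real.sqrt (1-z) * ∑' n : ℕ, cc n * z^n) 0 y := by
    intro y hy
    have hy1 : (0:ℝ) < 1 - y := by have h2 := hy.2; have h1 := hy.1; simp only [mem_Ioo] at *; linarith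
    have hsq : 0 < Real.sqrt (1-y) := Real.sqrt_pos.2 hy1
    have hs : HasDerivAt (fun z : ℝ => Real.sqrt (1-z)) (-(1/(2*Real.sqrt (1-y)))) y := by
      have h1 : HasDerivAt (fun z : ℝ => 1 - z) (-1) y := by
        simpa using (hasDerivAt_id y).const_sub 1
      have h2 := (Real.hasDerivAt_sqrt (ne_of_gt hy1)).comp y h1
      refine h2.congr_deriv ?_
      ring
    have hFd := F_deriv hr0 hr1 hy
    have hprod := hs.mul hFd
    have hFsum : HasSum (fun n : ℕ => cc n * y^n) (∑' n : ℕ, cc n * y^n) :=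
      (F_summable hr0 hr1 hy).hasSum
    have hDsum : HasSum (fun n : ℕ => cc n * (n * y^(n-1)))
        (∑' n : ℕ, cc n * (n * y^(n-1))) := by
      apply Summable.hasSum
      apply Summable.of_norm_bounded (summable_u hr0 hr1)
      intro n
      exact bound_term hr0 n (abs_le.2 ⟨le_of_lt hy.1, le_of_lt hy.2⟩)
    have hode := ode hFsum hDsum
    have hzero : -(1/(2*Real.sqrt (1-y))) * (∑' n : ℕ, cc n * y^n)
        + Real.sqrt (1-y) * (∑' n : ℕ, cc n * (n * y^(n-1))) = 0 := by
      rw [hode]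
      have hss : Real.sqrt (1-y) * Real.sqrt (1-y) = 1 - y :=
        Real.mul_self_sqrt (le_of_lt hy1)
      set T := ∑' n : ℕ, cc n * (n * y^(n-1)) with hT
      set s := Real.sqrt (1-y) with hsdef
      have key : 1/(2*s) * (2*(s*s) * T) = s * T := by
        field_simp
      rw [← hss]
      linarith [key]
    exact hzero ▸ hprod
  have hcont : ContinuousOn (fun z : ℝ => Real.sqrt (1-z) * ∑' n : ℕ, cc n * z^n) (Icc 0 x) :=
    fun y hy => ((hGderiv y (hmem y hy)).continuousAt).continuousWithinAt
  have hG0 : Real.sqrt (1-(0:ℝ)) * ∑' n : ℕ, cc n * (0:ℝ)^n = 1 := by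
    rw [tsum_at_zero]; simp
  have heq := eq_of_has_deriv_right_eq
      (f := fun z : ℝ => Real.sqrt (1-z) * ∑' n : ℕ, cc n * z^n)
      (g := fun _ => (1:ℝ)) (f' := fun _ => (0:ℝ)) (a := 0) (b := x)
      (fun y hy => ((hGderiv y (hmem y ⟨hy.1, le_of_lt hy.2⟩))).hasDerivWithinAt)
      (fun y _ => (hasDerivAt_const y (1:ℝ)).hasDerivWithinAt)
      hcont continuousOn_const (by simpa using hG0)
  have hGx : Real.sqrt (1-x) * ∑' n : ℕ, cc n * x^n = 1 := heq x ⟨hx0, le_refl x⟩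
  have hsq : 0 < Real.sqrt (1-x) := Real.sqrt_pos.2 (by linarith)
  have hFx : ∑' n : ℕ, cc n * x^n = 1 / Real.sqrt (1-x) := by
    rw [eq_div_iff (ne_of_gt hsq), mul_comm]
    exact hGx
  have hsum := (F_summable hr0 hr1 ⟨by linarith, hxr⟩).hasSum
  rwa [hFx] at hsum

-- Lemma B: series for 1 - sqrt(1-x)
set_option maxHeartbeats 1000000 in
lemma hasSum_one_sub_sqrt {x : ℝ} (hx0 : 0 ≤ x) (hx1 : x < 1) :
    HasSum (fun n : ℕ => cc n / (2*n+2) * x^(n+1)) (1 - Real.sqrt (1-x)) := by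
  set r : ℝ := (x+1)/2 with hr
  have hr0 : 0 < r := by positivity
  have hr1 : r < 1 := by rw [hr]; linarith
  have hxr : x < r := by rw [hr]; linarith
  have hmem : ∀ y ∈ Icc (0:ℝ) x, y ∈ Ioo (-r) r := by
    intro y hy; exact ⟨by linarith [hy.1], by linarith [hy.2]⟩
  have hu : Summable (fun n : ℕ => r^n) :=
    summable_geometric_of_lt_one (le_of_lt hr0) hr1
  have hderiv : ∀ n : ℕ, ∀ y : ℝ, HasDerivAt (fun z : ℝ => cc n / (2*n+2) * z^(n+1))
      (cc n / (2*n+2) * ((n+1) * y^n)) y := by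
    intro n y
    simpa using (hasDerivAt_pow (n+1) y).const_mul (cc n / (2*n+2))
  have hbound : ∀ n : ℕ, ∀ y ∈ Ioo (-r) r,
      ‖cc n / (2*n+2) * ((n+1) * y^n)‖ ≤ r^n := by
    intro n y hy
    have hyr : |y| ≤ r := abs_le.2 ⟨le_of_lt hy.1, le_of_lt hy.2⟩
    have h1 : |y^n| ≤ r^n := by
      rw [abs_pow]; exact pow_le_pow_left₀ (abs_nonneg y) hyr n
    have hccp := cc_pos n
    have hcc := cc_le_one n
    have hco : cc n / (2*(n:ℝ)+2) * ((n:ℝ)+1) = cc n / 2 := by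
      field_simp
    rw [Real.norm_eq_abs, abs_mul, abs_mul]
    rw [abs_of_pos (by positivity : (0:ℝ) < cc n / (2*(n:ℝ)+2)),
        abs_of_pos (by positivity : (0:ℝ) < ((n:ℝ)+1))]
    calc cc n / (2*(n:ℝ)+2) * (((n:ℝ)+1) * |y^n|)
        = cc n / 2 * |y^n| := by rw [← mul_assoc, hco]
      _ ≤ 1 / 2 * r^n := by
          apply mul_le_mul (by linarith) h1 (abs_nonneg _) (by norm_num)
      _ ≤ r^n := by nlinarith [pow_nonneg (le_of_lt hr0) n]
  have hsum0 : Summable (fun n : ℕ => cc n / (2*n+2) * (0:ℝ)^(n+1)) := by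
    apply summable_of_ne_finset_zero (s := (∅ : Finset ℕ))
    intro n _
    rw [zero_pow (Nat.succ_ne_zero n), mul_zero]
  have h0mem : (0:ℝ) ∈ Ioo (-r) r := ⟨by linarith, hr0⟩
  have hGd : ∀ y ∈ Ioo (-r) r, HasDerivAt (fun z : ℝ => ∑' n : ℕ, cc n / (2*n+2) * z^(n+1))
      (∑' n : ℕ, cc n / (2*n+2) * ((n+1) * y^n)) y := by
    intro y hy
    exact hasDerivAt_tsum_of_isPreconnected hu isOpen_Ioo isPreconnected_Ioo
      (fun n z _ => hderiv n z) hbound h0mem hsum0 hy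
  -- identify the derivative sum at nonneg points
  have hDval : ∀ y, 0 ≤ y → y ∈ Ioo (-r) r →
      (∑' n : ℕ, cc n / (2*n+2) * ((n+1) * y^n)) = 1/(2*Real.sqrt (1-y)) := by
    intro y hy0 hy
    have hA := hasSum_inv_sqrt hy0 (by have := hy.2; linarith)
    have hA2 := hA.mul_left (1/2)
    have hA3 : HasSum (fun n : ℕ => cc n / (2*n+2) * ((n+1) * y^n))
        (1/2 * (1/Real.sqrt (1-y))) := by
      refine hA2.congr_fun fun n => ?_
      have : (2*(n:ℝ)+2) ≠ 0 := by positivity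
      field_simp
    rw [hA3.tsum_eq]
    ring
  have hGd' : ∀ y ∈ Ico (0:ℝ) x,
      HasDerivWithinAt (fun z : ℝ => ∑' n : ℕ, cc n / (2*n+2) * z^(n+1))
        (1/(2*Real.sqrt (1-y))) (Ici y) y := by
    intro y hy
    have hym := hmem y ⟨hy.1, le_of_lt hy.2⟩
    have := hGd y hym
    rw [hDval y hy.1 hym] at this
    exact this.hasDerivWithinAt
  have hSd : ∀ y ∈ Ico (0:ℝ) x,
      HasDerivWithinAt (fun z : ℝ => 1 - Real.sqrt (1-z)) (1/(2*Real.sqrt (1-y))) (Ici y) y := by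
    intro y hy
    have hy1 : (0:ℝ) < 1 - y := by have := hy.2; linarith
    have h1 : HasDerivAt (fun z : ℝ => 1 - z) (-1) y := by
      simpa using (hasDerivAt_id y).const_sub 1
    have h2 := (Real.hasDerivAt_sqrt (ne_of_gt hy1)).comp y h1
    have h3 : HasDerivAt (fun z : ℝ => 1 - Real.sqrt (1-z)) (1/(2*Real.sqrt (1-y))) y := by
      have h4 := h2.const_sub 1
      refine h4.congr_deriv ?_
      ring
    exact h3.hasDerivWithinAt
  have hcont1 : ContinuousOn (fun z : ℝ => ∑' n : ℕ, cc n / (2*n+2) * z^(n+1)) (Icc 0 x) :=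
    fun y hy => ((hGd y (hmem y hy)).continuousAt).continuousWithinAt
  have hcont2 : ContinuousOn (fun z : ℝ => 1 - Real.sqrt (1-z)) (Icc 0 x) := by
    exact (continuous_const.sub (Real.continuous_sqrt.comp
      (continuous_const.sub continuous_id))).continuousOn
  have hinit : (∑' n : ℕ, cc n / (2*n+2) * (0:ℝ)^(n+1)) = 1 - Real.sqrt (1-0) := by
    have hz : (∑' n : ℕ, cc n / (2*n+2) * (0:ℝ)^(n+1)) = ∑' _ : ℕ, (0:ℝ) :=
      tsum_congr fun n => by rw [zero_pow (Nat.succ_ne_zero n), mul_zero]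
    rw [hz, tsum_zero]
    simp
  have heq := eq_of_has_deriv_right_eq (a := 0) (b := x)
      (f' := fun y => 1/(2*Real.sqrt (1-y))) hGd' hSd hcont1 hcont2 hinit
  have hGx := heq x ⟨hx0, le_refl x⟩
  have hsumx : Summable (fun n : ℕ => cc n / (2*n+2) * x^(n+1)) :=
    summable_of_summable_hasDerivAt_of_isPreconnected hu isOpen_Ioo isPreconnected_Ioo
      (fun n z _ => hderiv n z) hbound h0mem hsum0 ⟨by linarith, hxr⟩
  have := hsumx.hasSum
  rwa [hGx] at this

set_option maxHeartbeats 1000000 in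
-- Lemma C: series for arcsin on [0,1)
lemma hasSum_arcsin {x : ℝ} (hx0 : 0 ≤ x) (hx1 : x < 1) :
    HasSum (fun n : ℕ => cc n / (2*n+1) * x^(2*n+1)) (Real.arcsin x) := by
  set r : ℝ := (x+1)/2 with hr
  have hr0 : 0 < r := by positivity
  have hr1 : r < 1 := by rw [hr]; linarith
  have hxr : x < r := by rw [hr]; linarith
  have hmem : ∀ y ∈ Icc (0:ℝ) x, y ∈ Ioo (-r) r := by
    intro y hy; exact ⟨by linarith [hy.1], by linarith [hy.2]⟩
  have hu : Summable (fun n : ℕ => (r^2)^n) :=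
    summable_geometric_of_lt_one (by positivity) (by nlinarith)
  have hderiv : ∀ n : ℕ, ∀ y : ℝ, HasDerivAt (fun z : ℝ => cc n / (2*n+1) * z^(2*n+1))
      (cc n * y^(2*n)) y := by
    intro n y
    have h := (hasDerivAt_pow (2*n+1) y).const_mul (cc n / (2*n+1))
    have hne : (2*(n:ℝ)+1) ≠ 0 := by positivity
    refine h.congr_deriv ?_
    simp only [Nat.add_sub_cancel, Nat.cast_add, Nat.cast_mul, Nat.cast_ofNat, Nat.cast_one]
    field_simp
  have hbound : ∀ n : ℕ, ∀ y ∈ Ioo (-r) r, ‖cc n * y^(2*n)‖ ≤ (r^2)^n := by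
    intro n y hy
    have hyr : |y| ≤ r := abs_le.2 ⟨le_of_lt hy.1, le_of_lt hy.2⟩
    have h1 : |y^(2*n)| ≤ r^(2*n) := by
      rw [abs_pow]; exact pow_le_pow_left₀ (abs_nonneg y) hyr _
    rw [Real.norm_eq_abs, abs_mul, abs_of_pos (cc_pos n)]
    calc cc n * |y^(2*n)| ≤ 1 * r^(2*n) :=
          mul_le_mul (cc_le_one n) h1 (abs_nonneg _) zero_le_one
      _ = (r^2)^n := by rw [one_mul, ← pow_mul]
  have hsum0 : Summable (fun n : ℕ => cc n / (2*n+1) * (0:ℝ)^(2*n+1)) := by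
    apply summable_of_ne_finset_zero (s := (∅ : Finset ℕ))
    intro n _
    rw [zero_pow (Nat.succ_ne_zero _), mul_zero]
  have h0mem : (0:ℝ) ∈ Ioo (-r) r := ⟨by linarith, hr0⟩
  have hGd : ∀ y ∈ Ioo (-r) r, HasDerivAt (fun z : ℝ => ∑' n : ℕ, cc n / (2*n+1) * z^(2*n+1))
      (∑' n : ℕ, cc n * y^(2*n)) y := by
    intro y hy
    exact hasDerivAt_tsum_of_isPreconnected hu isOpen_Ioo isPreconnected_Ioo
      (fun n z _ => hderiv n z) hbound h0mem hsum0 hy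
  have hDval : ∀ y, 0 ≤ y → y < 1 →
      (∑' n : ℕ, cc n * y^(2*n)) = 1/Real.sqrt (1-y^2) := by
    intro y hy0 hy1
    have hy2 : y^2 < 1 := by nlinarith
    have hA := hasSum_inv_sqrt (x := y^2) (by positivity) hy2
    have hA2 : HasSum (fun n : ℕ => cc n * y^(2*n)) (1/Real.sqrt (1-y^2)) := by
      refine hA.congr_fun fun n => ?_
      rw [← pow_mul]
    exact hA2.tsum_eq
  have hGd' : ∀ y ∈ Ico (0:ℝ) x,
      HasDerivWithinAt (fun z : ℝ => ∑' n : ℕ, cc n / (2*n+1) * z^(2*n+1))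
        (1/Real.sqrt (1-y^2)) (Ici y) y := by
    intro y hy
    have hym := hmem y ⟨hy.1, le_of_lt hy.2⟩
    have h := hGd y hym
    rw [hDval y hy.1 (by have := hy.2; linarith)] at h
    exact h.hasDerivWithinAt
  have hSd : ∀ y ∈ Ico (0:ℝ) x,
      HasDerivWithinAt Real.arcsin (1/Real.sqrt (1-y^2)) (Ici y) y := by
    intro y hy
    have hylt : y < 1 := by have := hy.2; linarith
    have h := Real.hasDerivAt_arcsin (by intro h; rw [h] at hy; have := hy.1; linarith)
      (ne_of_lt hylt)
    exact h.hasDerivWithinAt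
  have hcont1 : ContinuousOn (fun z : ℝ => ∑' n : ℕ, cc n / (2*n+1) * z^(2*n+1)) (Icc 0 x) :=
    fun y hy => ((hGd y (hmem y hy)).continuousAt).continuousWithinAt
  have hcont2 : ContinuousOn Real.arcsin (Icc 0 x) := Real.continuous_arcsin.continuousOn
  have hinit : (∑' n : ℕ, cc n / (2*n+1) * (0:ℝ)^(2*n+1)) = Real.arcsin 0 := by
    have hz : (∑' n : ℕ, cc n / (2*n+1) * (0:ℝ)^(2*n+1)) = ∑' _ : ℕ, (0:ℝ) :=
      tsum_congr fun n => by rw [zero_pow (Nat.succ_ne_zero _), mul_zero]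
    rw [hz, tsum_zero, Real.arcsin_zero]
  have heq := eq_of_has_deriv_right_eq (a := 0) (b := x)
      (f' := fun y => 1/Real.sqrt (1-y^2)) hGd' hSd hcont1 hcont2 hinit
  have hGx := heq x ⟨hx0, le_refl x⟩
  have hsumx : Summable (fun n : ℕ => cc n / (2*n+1) * x^(2*n+1)) :=
    summable_of_summable_hasDerivAt_of_isPreconnected hu isOpen_Ioo isPreconnected_Ioo
      (fun n z _ => hderiv n z) hbound h0mem hsum0 ⟨by linarith, hxr⟩
  have h := hsumx.hasSum
  rwa [hGx] at h

/-- The Taylor coefficients (beyond the constant and linear terms, up to the `1/π`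
factor) of the NTK angular function `k_ntk`. -/
noncomputable def antk (ℓ : ℕ) : ℝ :=
  ((2 * ℓ + 3 : ℕ) : ℝ) * ((2 * ℓ).factorial : ℝ) /
    (2 ^ (2 * ℓ) * ((ℓ.factorial : ℝ)) ^ 2 * ((2 * ℓ + 1 : ℕ) : ℝ) * ((2 * ℓ + 2 : ℕ) : ℝ))

/-- The depth-1 NTK angular function. -/
noncomputable def kntk (β : ℝ) : ℝ :=
  (1 / Real.pi) * (Real.sqrt (1 - β ^ 2) + 2 * β * (Real.pi - Real.arccos β))

lemma antk_nonneg (n : ℕ) : 0 ≤ antk n := by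
  unfold antk; positivity

lemma antk_eq (n : ℕ) : antk n = 2 * (cc n / (2*n+1)) - cc n / (2*n+2) := by
  unfold antk cc
  have h1 : ((n.factorial : ℝ)) ≠ 0 := Nat.cast_ne_zero.2 n.factorial_ne_zero
  have h2 : (2:ℝ)^(2*n) = 4^n := by rw [pow_mul]; norm_num
  rw [h2]
  have h3 : (2*(n:ℝ)+1) ≠ 0 := by positivity
  have h4 : (2*(n:ℝ)+2) ≠ 0 := by positivity
  push_cast
  field_simp
  ring

lemma hasSum_g {β : ℝ} (h0 : 0 ≤ β) (h1 : β < 1) :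
    HasSum (fun n : ℕ => antk n * β^(2*n+2))
      (Real.sqrt (1-β^2) - 1 + 2*β*Real.arcsin β) := by
  have hβ2 : β^2 < 1 := by nlinarith
  have hB := hasSum_one_sub_sqrt (x := β^2) (by positivity) hβ2
  have hB' : HasSum (fun n : ℕ => cc n/(2*n+2) * β^(2*n+2)) (1 - Real.sqrt (1-β^2)) := by
    refine hB.congr_fun fun n => ?_
    rw [← pow_mul, Nat.mul_add, Nat.mul_one]
  have hC := (hasSum_arcsin h0 h1).mul_left (2*β)
  have hC' : HasSum (fun n : ℕ => 2 * (cc n/(2*n+1)) * β^(2*n+2)) (2*β*Real.arcsin β) := by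
    refine hC.congr_fun fun n => ?_
    rw [pow_succ]
    ring
  have hval : Real.sqrt (1-β^2) - 1 + 2*β*Real.arcsin β
      = 2*β*Real.arcsin β - (1 - Real.sqrt (1-β^2)) := by ring
  rw [hval]
  refine (hC'.sub hB').congr_fun fun n => ?_
  rw [antk_eq]
  ring

lemma summable_antk : Summable antk := by
  apply summable_of_sum_range_le (c := Real.pi) antk_nonneg
  intro n
  have key : ∀ β:ℝ, 0 ≤ β → β < 1 →
      ∑ i ∈ Finset.range n, antk i * β^(2*i+2) ≤ Real.pi := by
    intro β hb0 hb1
    have hg := hasSum_g hb0 hb1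
    have hle := sum_le_hasSum (Finset.range n) (fun i _ => by
      have := antk_nonneg i
      positivity) hg
    have harc : Real.arcsin β ≤ Real.pi/2 := Real.arcsin_le_pi_div_two β
    have harc0 : 0 ≤ Real.arcsin β := Real.arcsin_nonneg.2 hb0
    have hs : Real.sqrt (1-β^2) ≤ 1 := Real.sqrt_le_one.2 (by nlinarith)
    nlinarith [Real.pi_pos]
  have hlim : Tendsto (fun β : ℝ => ∑ i ∈ Finset.range n, antk i * β^(2*i+2)) (𝓝[<] (1:ℝ))
      (𝓝 (∑ i ∈ Finset.range n, antk i)) := by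
    have hc : Continuous fun β : ℝ => ∑ i ∈ Finset.range n, antk i * β^(2*i+2) :=
      continuous_finset_sum _ fun i _ => continuous_const.mul (continuous_pow _)
    have h := hc.tendsto (1:ℝ)
    simp only [one_pow, mul_one] at h
    exact h.mono_left nhdsWithin_le_nhds
  refine le_of_tendsto hlim ?_
  filter_upwards [Ioo_mem_nhdsLT_of_mem (show (1:ℝ) ∈ Ioc (0:ℝ) 1 from ⟨one_pos, le_refl 1⟩)]
    with γ hγ
  exact key γ (le_of_lt hγ.1) hγ.2

lemma hasSum_antk : HasSum antk (Real.pi - 1) := by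
  have hT := summable_antk.hasSum
  have h1 : Tendsto (fun β : ℝ => ∑' n : ℕ, antk n * β^(2*n+2)) (𝓝[<] (1:ℝ))
      (𝓝 (∑' n, antk n)) := by
    apply tendsto_tsum_of_dominated_convergence (bound := antk) summable_antk
    · intro n
      have hc : Continuous fun β : ℝ => antk n * β^(2*n+2) := continuous_const.mul (continuous_pow _)
      have h := hc.tendsto (1:ℝ)
      simp only [one_pow, mul_one] at h
      exact h.mono_left nhdsWithin_le_nhds
    · filter_upwards [Ioo_mem_nhdsLT_of_mem (show (1:ℝ) ∈ Ioc (0:ℝ) 1 from ⟨one_pos, le_refl 1⟩)]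
        with γ hγ n
      rw [Real.norm_eq_abs, abs_mul, abs_of_nonneg (antk_nonneg n), abs_pow,
        abs_of_nonneg (le_of_lt hγ.1)]
      calc antk n * γ^(2*n+2) ≤ antk n * 1 :=
            mul_le_mul_of_nonneg_left (pow_le_one₀ (le_of_lt hγ.1) (le_of_lt hγ.2)) (antk_nonneg n)
        _ = antk n := mul_one _
  have h2 : Tendsto (fun β : ℝ => ∑' n : ℕ, antk n * β^(2*n+2)) (𝓝[<] (1:ℝ))
      (𝓝 (Real.pi - 1)) := by
    have hc : Continuous fun β : ℝ => Real.sqrt (1-β^2) - 1 + 2*β*Real.arcsin β := by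
      have c1 : Continuous fun β : ℝ => Real.sqrt (1-β^2) :=
        Real.continuous_sqrt.comp (continuous_const.sub (continuous_pow 2))
      exact (c1.sub continuous_const).add
        ((continuous_const.mul continuous_id).mul Real.continuous_arcsin)
    have hv : Real.sqrt (1-(1:ℝ)^2) - 1 + 2*1*Real.arcsin 1 = Real.pi - 1 := by
      have hz : (1:ℝ)-1^2 = 0 := by norm_num
      rw [hz, Real.sqrt_zero, Real.arcsin_one]
      ring
    have h := hc.tendsto (1:ℝ)
    rw [hv] at h
    have h' := h.mono_left (nhdsWithin_le_nhds (s := Iio (1:ℝ)))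
    refine h'.congr' ?_
    filter_upwards [Ioo_mem_nhdsLT_of_mem (show (1:ℝ) ∈ Ioc (0:ℝ) 1 from ⟨one_pos, le_refl 1⟩)]
      with γ hγ
    exact (hasSum_g (le_of_lt hγ.1) hγ.2).tsum_eq.symm
  have heq : ∑' n, antk n = Real.pi - 1 := tendsto_nhds_unique h1 h2
  rwa [heq] at hT

lemma hasSum_g' {β : ℝ} (h0 : 0 ≤ β) (h1 : β ≤ 1) :
    HasSum (fun n : ℕ => antk n * β^(2*n+2))
      (Real.sqrt (1-β^2) - 1 + 2*β*Real.arcsin β) := by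
  rcases lt_or_eq_of_le h1 with h | h
  · exact hasSum_g h0 h
  · subst h
    have hv : Real.sqrt (1-(1:ℝ)^2) - 1 + 2*1*Real.arcsin 1 = Real.pi - 1 := by
      have hz : (1:ℝ)-1^2 = 0 := by norm_num
      rw [hz, Real.sqrt_zero, Real.arcsin_one]
      ring
    rw [hv]
    exact hasSum_antk.congr_fun fun n => by rw [one_pow, mul_one]

/-- On `[−1,1]`, `k_ntk(β) = 1/π + β + (1/π)·Σ_{ℓ=0}^∞ a_ℓ β^{2ℓ+2}`, the series
converging (absolutely, as any `HasSum` over ℝ). -/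
theorem kntk_taylor_series (β : ℝ) (hβ : β ∈ Set.Icc (-1 : ℝ) 1) :
    HasSum (fun ℓ : ℕ => (1 / Real.pi) * antk ℓ * β ^ (2 * ℓ + 2))
      (kntk β - (1 / Real.pi + β)) := by
  obtain ⟨hm1, h1⟩ := hβ
  have key : HasSum (fun ℓ : ℕ => antk ℓ * β^(2*ℓ+2))
      (Real.sqrt (1-β^2) - 1 + 2*β*Real.arcsin β) := by
    rcases le_or_gt 0 β with h | h
    · exact hasSum_g' h h1
    · have h2 := hasSum_g' (β := -β) (by linarith) (by linarith)
      have hvv : Real.sqrt (1-(-β)^2) - 1 + 2*(-β)*Real.arcsin (-β)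
          = Real.sqrt (1-β^2) - 1 + 2*β*Real.arcsin β := by
        rw [Real.arcsin_neg, neg_sq]
        ring
      rw [hvv] at h2
      refine h2.congr_fun fun n => ?_
      rw [Even.neg_pow ⟨n+1, by ring⟩]
  have hfinal := key.mul_left (1/Real.pi)
  have hval : (1/Real.pi) * (Real.sqrt (1-β^2) - 1 + 2*β*Real.arcsin β)
      = kntk β - (1/Real.pi + β) := by
    unfold kntk
    rw [Real.arccos_eq_pi_div_two_sub_arcsin]
    have hpi := Real.pi_ne_zero
    field_simp
    ring
  rw [← hval]
  exact hfinal.congr_fun fun n => by ring
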